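/- arXiv:2107.04093 — 3 statements merged into one kernel-verified Lean document; each statement's English description precedes it below -/
import Mathlib

section
/- If s_{2k} = 2 and s_{2k+1} = 3 for all k ∈ ℕ₀, then the Vilenkin function ψ_n is real-valued if and only if the digit n_{2k+1} = 0 for every k ∈ ℕ₀. Equivalently, ⊖n = n iff all odd-indexed digits of n vanish. -/
open MeasureTheory

noncomputable section

/-- `Pprod s k = s 0 * s 1 * ⋯ * s (k-1)`. -/
def Pprod (s : ℕ → ℕ) : ℕ → ℕ
  | 0 => 1
  | k + 1 => Pprod s k * s k

/-- The `k`-th digit of `n` in the mixed-radix expansion determined by `s`. -/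
def digit (s : ℕ → ℕ) (n k : ℕ) : ℕ := (n / Pprod s k) % s k

/-- Digitwise negation `⊖ n`. -/
def oneg (s : ℕ → ℕ) (n : ℕ) : ℕ :=
  ∑ k ∈ Finset.range (n + 1), ((s k - digit s n k) % s k) * Pprod s k

/-- Digitwise addition `n ⊕ m`. -/
def oplus (s : ℕ → ℕ) (n m : ℕ) : ℕ :=
  ∑ k ∈ Finset.range (n + m + 1), ((digit s n k + digit s m k) % s k) * Pprod s k

/-- The complex Vilenkin function `ψ n` on `G = ∏ k, ℤ/(s k)ℤ`. -/
def vil (s : ℕ → ℕ) (n : ℕ) (x : ∀ k, ZMod (s k)) : ℂ :=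
  ∏ k ∈ Finset.range (n + 1),
    Complex.exp (2 * (Real.pi : ℂ) * Complex.I * (digit s n k : ℂ) * ((x k).val : ℂ) / (s k : ℂ))

namespace VK

/-- The 2-3 Vilenkin sequence. -/
abbrev sV : ℕ → ℕ := fun j : ℕ => if j % 2 = 0 then 2 else 3

lemma hsV : ∀ k, 2 ≤ sV k := by
  intro k; dsimp [sV]; split <;> omega

variable {s : ℕ → ℕ}

lemma Pprod_pos (hs : ∀ k, 2 ≤ s k) (k : ℕ) : 0 < Pprod s k := by
  induction k with
  | zero => simp [Pprod]
  | succ k ih =>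
    have := hs k
    simp only [Pprod]
    exact Nat.mul_pos ih (by omega)

lemma pow_le_Pprod (hs : ∀ k, 2 ≤ s k) : ∀ k, 2 ^ k ≤ Pprod s k
  | 0 => le_refl 1
  | k + 1 => by
    have h1 := pow_le_Pprod hs k
    have h2 := hs k
    simp only [Pprod, pow_succ]
    exact Nat.mul_le_mul h1 h2

lemma lt_Pprod (hs : ∀ k, 2 ≤ s k) (k : ℕ) : k < Pprod s k :=
  lt_of_lt_of_le (Nat.lt_two_pow_self (n := k)) (pow_le_Pprod hs k)

lemma digit_lt (hs : ∀ k, 2 ≤ s k) (n k : ℕ) : digit s n k < s k :=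
  Nat.mod_lt _ (by have := hs k; omega)

lemma Pprod_eq_prod (s : ℕ → ℕ) : ∀ k, Pprod s k = ∏ i ∈ Finset.range k, s i
  | 0 => rfl
  | k + 1 => by rw [Pprod, Pprod_eq_prod s k, Finset.prod_range_succ]

lemma sum_digit_mod (hs : ∀ k, 2 ≤ s k) (n : ℕ) :
    ∀ m, ∑ k ∈ Finset.range m, digit s n k * Pprod s k = n % Pprod s m
  | 0 => by simp [Pprod, Nat.mod_one]
  | m + 1 => by
    rw [Finset.sum_range_succ, sum_digit_mod hs n m]
    show n % Pprod s m + (n / Pprod s m) % s m * Pprod s m = n % Pprod s (m + 1)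
    show _ = n % (Pprod s m * s m)
    have h := Nat.div_add_mod (n % (Pprod s m * s m)) (Pprod s m)
    rw [Nat.mod_mul_right_div_self, Nat.mod_mul_right_mod, mul_comm (Pprod s m)] at h
    omega

lemma sum_digit_self (hs : ∀ k, 2 ≤ s k) (n : ℕ) :
    ∑ k ∈ Finset.range (n + 1), digit s n k * Pprod s k = n := by
  rw [sum_digit_mod hs]
  exact Nat.mod_eq_of_lt (lt_trans (Nat.lt_succ_self n) (lt_Pprod hs (n + 1)))

lemma sum_lt (hs : ∀ k, 2 ≤ s k) {f : ℕ → ℕ} (hf : ∀ k, f k < s k) :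
    ∀ m, ∑ k ∈ Finset.range m, f k * Pprod s k < Pprod s m
  | 0 => by simp [Pprod]
  | m + 1 => by
    rw [Finset.sum_range_succ]
    have h1 := sum_lt hs hf m
    have h2 := hf m
    have h3 := Pprod_pos hs m
    show _ < Pprod s m * s m
    nlinarith

lemma digit_sum (hs : ∀ k, 2 ≤ s k) {f : ℕ → ℕ} (hf : ∀ k, f k < s k) {m j : ℕ}
    (hj : j < m) : digit s (∑ k ∈ Finset.range m, f k * Pprod s k) j = f j := by
  have hsplit : ∑ k ∈ Finset.range m, f k * Pprod s k
      = (∑ k ∈ Finset.range j, f k * Pprod s k)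
        + Pprod s j * ∑ k ∈ Finset.Ico j m, f k * ∏ i ∈ Finset.Ico j k, s i := by
    rw [Finset.mul_sum, Finset.range_eq_Ico,
      ← Finset.sum_Ico_consecutive _ (Nat.zero_le j) hj.le, ← Finset.range_eq_Ico]
    congr 1
    refine Finset.sum_congr rfl fun k hk => ?_
    have hjk : j ≤ k := (Finset.mem_Ico.1 hk).1
    rw [Pprod_eq_prod s k, Pprod_eq_prod s j, Finset.range_eq_Ico,
      ← Finset.prod_Ico_consecutive s (Nat.zero_le j) hjk, ← Finset.range_eq_Ico]
    ring
  rw [hsplit]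
  unfold digit
  have hA : ∑ k ∈ Finset.range j, f k * Pprod s k < Pprod s j := sum_lt hs hf j
  rw [Nat.add_mul_div_left _ _ (Pprod_pos hs j), Nat.div_eq_of_lt hA, zero_add]
  rw [Finset.sum_eq_sum_Ico_succ_bot hj]
  have htail : ∑ k ∈ Finset.Ico (j + 1) m, f k * ∏ i ∈ Finset.Ico j k, s i
      = s j * ∑ k ∈ Finset.Ico (j + 1) m, f k * ∏ i ∈ Finset.Ico (j + 1) k, s i := by
    rw [Finset.mul_sum]
    refine Finset.sum_congr rfl fun k hk => ?_
    have hk' : j < k := (Finset.mem_Ico.1 hk).1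
    rw [Finset.prod_eq_prod_Ico_succ_bot hk']
    ring
  rw [htail]
  simp only [Finset.Ico_self, Finset.prod_empty, mul_one]
  rw [Nat.add_mul_mod_self_left]
  exact Nat.mod_eq_of_lt (hf j)

lemma le_of_digit_ne (hs : ∀ k, 2 ≤ s k) {n j : ℕ} (h : digit s n j ≠ 0) : j ≤ n := by
  by_contra hlt
  push_neg at hlt
  have hPj := lt_Pprod hs j
  by_cases hnp : n < Pprod s j
  · apply h
    unfold digit
    rw [Nat.div_eq_of_lt hnp]
    simp
  · omega

lemma sV_odd {k : ℕ} (h : k % 2 = 1) : sV k = 3 := by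
  simp [sV, h]

lemma sV_even {k : ℕ} (h : k % 2 = 0) : sV k = 2 := by
  simp [sV, h]

lemma part2 (n : ℕ) :
    oneg sV n = n ↔ ∀ k : ℕ, digit sV n (2 * k + 1) = 0 := by
  have hflt : ∀ k, (sV k - digit sV n k) % sV k < sV k :=
    fun k => Nat.mod_lt _ (by have := hsV k; omega)
  constructor
  · intro H k
    by_contra hd
    have hj3 : sV (2 * k + 1) = 3 := sV_odd (by omega)
    have hdlt : digit sV n (2 * k + 1) < 3 := hj3 ▸ digit_lt hsV n (2 * k + 1)
    have hjn : 2 * k + 1 ≤ n := le_of_digit_ne hsV hd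
    have hdig : digit sV (oneg sV n) (2 * k + 1)
        = (sV (2 * k + 1) - digit sV n (2 * k + 1)) % sV (2 * k + 1) := by
      unfold oneg
      exact digit_sum hsV hflt (by omega)
    rw [H, hj3] at hdig
    omega
  · intro H
    unfold oneg
    have heq : ∀ k ∈ Finset.range (n + 1),
        (sV k - digit sV n k) % sV k * Pprod sV k = digit sV n k * Pprod sV k := by
      intro k _
      congr 1
      rcases Nat.even_or_odd k with he | ho
      · have h2 : sV k = 2 := sV_even (Nat.even_iff.1 he)
        have := digit_lt hsV n k
        rw [h2] at *
        omega
      · have h3 : sV k = 3 := sV_odd (Nat.odd_iff.1 ho)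
        have hd0 : digit sV n k = 0 := by
          obtain ⟨m, hm⟩ := ho
          rw [hm]
          exact H m
        rw [h3, hd0]
    rw [Finset.sum_congr rfl heq, sum_digit_self hsV]

lemma part1 (n : ℕ) :
    (∀ x : ∀ k, ZMod (sV k), (vil sV n x).im = 0) ↔
      ∀ k : ℕ, digit sV n (2 * k + 1) = 0 := by
  constructor
  · intro H k
    by_contra hd
    set j := 2 * k + 1 with hjdef
    have hj3 : sV j = 3 := sV_odd (by omega)
    have hdlt : digit sV n j < 3 := hj3 ▸ digit_lt hsV n j
    have hjn : j ≤ n := le_of_digit_ne hsV hd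
    classical
    set x : ∀ i, ZMod (sV i) := fun i => if i = j then 1 else 0 with hx
    have hprod : vil sV n x
        = Complex.exp (((2 * Real.pi * (digit sV n j) / 3 : ℝ) : ℂ) * Complex.I) := by
      unfold vil
      rw [Finset.prod_eq_single j]
      · congr 1
        have hxj : x j = 1 := by simp [hx]
        haveI : Fact (1 < sV j) := ⟨by omega⟩
        rw [hxj, ZMod.val_one, hj3]
        push_cast
        ring
      · intro b _ hbj
        have hxb : x b = 0 := by simp [hx, hbj]
        haveI : NeZero (sV b) := ⟨by have := hsV b; omega⟩
        rw [hxb, ZMod.val_zero]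
        simp
      · intro hj
        exact absurd (Finset.mem_range.2 (by omega)) hj
    have him := H x
    rw [hprod, Complex.exp_ofReal_mul_I_im] at him
    obtain ⟨m, hm⟩ := Real.sin_eq_zero_iff.1 him
    have hm' : (m : ℝ) * Real.pi = (2 * (digit sV n j) / 3) * Real.pi := by
      rw [hm]; ring
    have hm2 : (m : ℝ) = 2 * (digit sV n j) / 3 :=
      mul_right_cancel₀ Real.pi_ne_zero hm'
    have hm3 : (3 : ℝ) * m = 2 * (digit sV n j) := by
      rw [hm2]; ring
    have hm4 : (3 : ℤ) * m = 2 * (digit sV n j : ℤ) := by exact_mod_cast hm3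
    omega
  · intro H x
    have hconj : (starRingEnd ℂ) (vil sV n x) = vil sV n x := by
      unfold vil
      rw [map_prod]
      refine Finset.prod_congr rfl fun k _ => ?_
      rcases Nat.even_or_odd k with he | ho
      · have h2 : sV k = 2 := sV_even (Nat.even_iff.1 he)
        have hexp : 2 * (Real.pi : ℂ) * Complex.I * (digit sV n k : ℂ)
              * (((x k).val : ℕ) : ℂ) / ((sV k : ℕ) : ℂ)
            = ((digit sV n k * (x k).val : ℕ) : ℂ) * ((Real.pi : ℂ) * Complex.I) := by
          have hc : ((sV k : ℕ) : ℂ) = 2 := by rw [h2]; norm_num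
          rw [hc]
          push_cast
          ring
        rw [hexp, Complex.exp_nat_mul, Complex.exp_mul_I]
        simp [map_pow]
      · have hd0 : digit sV n k = 0 := by
          obtain ⟨m, hm⟩ := ho
          rw [hm]
          exact H m
        simp [hd0]
    exact Complex.conj_eq_iff_im.1 hconj

end VK

theorem vilenkin_realValued_iff_odd_digits_vanish (n : ℕ) :
    ((∀ x : ∀ k, ZMod ((fun j : ℕ => if j % 2 = 0 then 2 else 3) k),
        (vil (fun j => if j % 2 = 0 then 2 else 3) n x).im = 0) ↔
      ∀ k : ℕ, digit (fun j => if j % 2 = 0 then 2 else 3) n (2 * k + 1) = 0) ∧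
    (oneg (fun j => if j % 2 = 0 then 2 else 3) n = n ↔
      ∀ k : ℕ, digit (fun j => if j % 2 = 0 then 2 else 3) n (2 * k + 1) = 0) := by
  exact ⟨VK.part1 n, VK.part2 n⟩
end
end

section
/- Let n ∈ ℕ and r ∈ ℕ₀ with P_r ≤ n < P_{r+1} (so the leading digit n_r > 0), and set n' = n − n_r P_r. Then: (1) if n_r < s_r/2 then n < ⊖n; (2) if n_r > s_r/2 then n > ⊖n; (3) if n_r = s_r/2 (so s_r is even) then n < ⊖n ⟺ n' < ⊖n', n > ⊖n ⟺ n' > ⊖n', and n = ⊖n ⟺ n' = ⊖n'. -/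
open MeasureTheory

noncomputable section

lemma Pprod_pos (s : ℕ → ℕ) (hs : ∀ k, 2 ≤ s k) (k : ℕ) : 0 < Pprod s k := by
  induction k with
  | zero => simp [Pprod]
  | succ k ih => exact Nat.mul_pos ih (lt_of_lt_of_le (by norm_num) (hs k))

lemma Pprod_le (s : ℕ → ℕ) (hs : ∀ k, 2 ≤ s k) {k m : ℕ} (h : k ≤ m) :
    Pprod s k ≤ Pprod s m := by
  induction m with
  | zero => have hk0 : k = 0 := Nat.le_zero.mp h; simp [hk0]
  | succ m ih =>
    rcases Nat.lt_or_ge k (m+1) with hk | hk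
    · calc Pprod s k ≤ Pprod s m := ih (Nat.lt_succ_iff.mp hk)
        _ ≤ Pprod s m * s m := Nat.le_mul_of_pos_right _ (by linarith [hs m])
        _ = Pprod s (m+1) := rfl
    · have : k = m + 1 := le_antisymm h hk
      simp [this]

lemma lt_Pprod (s : ℕ → ℕ) (hs : ∀ k, 2 ≤ s k) (k : ℕ) : k < Pprod s k := by
  induction k with
  | zero => simp [Pprod]
  | succ k ih =>
    have : k + 1 ≤ Pprod s k := ih
    calc k + 1 < 2 * Pprod s k := by omega
      _ ≤ Pprod s k * s k := by
          rw [mul_comm]; exact Nat.mul_le_mul_left _ (hs k)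
      _ = Pprod s (k+1) := rfl

lemma Pprod_dvd (s : ℕ → ℕ) {k m : ℕ} (h : k ≤ m) : Pprod s k ∣ Pprod s m := by
  induction m with
  | zero => have hk0 : k = 0 := Nat.le_zero.mp h; simp [hk0]
  | succ m ih =>
    rcases Nat.lt_or_ge k (m+1) with hk | hk
    · exact dvd_mul_of_dvd_left (ih (Nat.lt_succ_iff.mp hk)) _
    · have : k = m + 1 := le_antisymm h hk
      simp [this]

lemma digit_lt (s : ℕ → ℕ) (hs : ∀ k, 2 ≤ s k) (n k : ℕ) : digit s n k < s k :=
  Nat.mod_lt _ (by linarith [hs k])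

lemma digit_eq_zero (s : ℕ → ℕ) {n k : ℕ} (h : n < Pprod s k) : digit s n k = 0 := by
  simp [digit, Nat.div_eq_of_lt h]

lemma digit_mod (s : ℕ → ℕ) (hs : ∀ k, 2 ≤ s k) (n : ℕ) {k r : ℕ} (h : k < r) :
    digit s (n % Pprod s r) k = digit s n k := by
  obtain ⟨c, hc⟩ := Pprod_dvd s (show k + 1 ≤ r from h)
  have hPk : 0 < Pprod s k := Pprod_pos s hs k
  have hPr : Pprod s r = Pprod s k * (s k * c) := by
    rw [hc]; show Pprod s k * s k * c = _; ring
  have hn : n = n % Pprod s r + (s k * c * (n / Pprod s r)) * Pprod s k := by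
    conv_lhs => rw [← Nat.mod_add_div n (Pprod s r)]
    rw [hPr]; ring
  unfold digit
  conv_rhs => rw [hn]
  rw [Nat.add_mul_div_right _ _ hPk]
  rw [show s k * c * (n / Pprod s r) = s k * (c * (n / Pprod s r)) by ring,
    Nat.add_mul_mod_self_left]

lemma sum_lt_Pprod (s : ℕ → ℕ) (hs : ∀ k, 2 ≤ s k) (r : ℕ) (a : ℕ → ℕ)
    (ha : ∀ k, a k < s k) :
    ∑ k ∈ Finset.range r, a k * Pprod s k < Pprod s r := by
  induction r with
  | zero => simp [Pprod]
  | succ r ih =>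
    rw [Finset.sum_range_succ]
    have h1 : a r * Pprod s r ≤ (s r - 1) * Pprod s r :=
      Nat.mul_le_mul_right _ (by have := ha r; omega)
    have h2 : Pprod s r + (s r - 1) * Pprod s r = Pprod s (r+1) := by
      show _ = Pprod s r * s r
      rw [show Pprod s r + (s r - 1) * Pprod s r = (s r - 1 + 1) * Pprod s r by ring,
        Nat.sub_add_cancel (by linarith [hs r]), mul_comm]
    omega

lemma digit_sum (s : ℕ → ℕ) (hs : ∀ k, 2 ≤ s k) {m n : ℕ} (h : n < Pprod s m) :
    ∑ k ∈ Finset.range m, digit s n k * Pprod s k = n := by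
  induction m generalizing n with
  | zero =>
    simp only [Pprod] at h
    interval_cases n
    simp
  | succ m ih =>
    rw [Finset.sum_range_succ]
    have hPm : 0 < Pprod s m := Pprod_pos s hs m
    have hdiv : n / Pprod s m < s m := by
      rw [Nat.div_lt_iff_lt_mul hPm, mul_comm]; exact h
    have hdm : digit s n m = n / Pprod s m := by
      simp [digit, Nat.mod_eq_of_lt hdiv]
    have hmod : n % Pprod s m < Pprod s m := Nat.mod_lt _ hPm
    have := ih hmod
    have heq : ∑ k ∈ Finset.range m, digit s n k * Pprod s k
        = ∑ k ∈ Finset.range m, digit s (n % Pprod s m) k * Pprod s k := by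
      apply Finset.sum_congr rfl
      intro k hk
      rw [digit_mod s hs n (Finset.mem_range.mp hk)]
    rw [heq, this, hdm, Nat.mod_add_div']

lemma oneg_eq (s : ℕ → ℕ) (hs : ∀ k, 2 ≤ s k) {m n : ℕ} (h : n < Pprod s m) :
    oneg s n = ∑ k ∈ Finset.range m, ((s k - digit s n k) % s k) * Pprod s k := by
  have key : ∀ k, n < Pprod s k → ((s k - digit s n k) % s k) * Pprod s k = 0 := by
    intro k hk
    rw [digit_eq_zero s hk]
    simp
  unfold oneg
  rcases le_total (n + 1) m with hm | hm
  · rw [← Finset.sum_subset (Finset.range_subset_range.mpr hm)]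
    intro k hk hk'
    apply key
    have : n + 1 ≤ k := by simpa using hk'
    calc n < k := this
      _ < Pprod s k := lt_Pprod s hs k
  · rw [Finset.sum_subset (Finset.range_subset_range.mpr hm)]
    intro k hk hk'
    apply key
    have : m ≤ k := by simpa using hk'
    exact lt_of_lt_of_le h (Pprod_le s hs this)
theorem oneg_compare_leading_digit (s : ℕ → ℕ) (hs : ∀ k, 2 ≤ s k) (n r : ℕ)
    (h1 : Pprod s r ≤ n) (h2 : n < Pprod s (r + 1)) :
    (2 * digit s n r < s r → n < oneg s n) ∧
    (s r < 2 * digit s n r → oneg s n < n) ∧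
    (2 * digit s n r = s r →
      ((n < oneg s n ↔ n - digit s n r * Pprod s r < oneg s (n - digit s n r * Pprod s r)) ∧
       (oneg s n < n ↔ oneg s (n - digit s n r * Pprod s r) < n - digit s n r * Pprod s r) ∧
       (n = oneg s n ↔ n - digit s n r * Pprod s r = oneg s (n - digit s n r * Pprod s r)))) := by
  set P := Pprod s r with hP
  have hPpos : 0 < P := Pprod_pos s hs r
  set d := digit s n r with hd
  have hdiv : n / P < s r := by
    rw [Nat.div_lt_iff_lt_mul hPpos, mul_comm]; exact h2
  have hdval : d = n / P := by
    simp [hd, digit, Nat.mod_eq_of_lt hdiv]; exact Nat.mod_eq_of_lt hdiv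
  have hd1 : 1 ≤ d := by
    rw [hdval]; exact (Nat.one_le_div_iff hPpos).mpr h1
  have hdlt : d < s r := digit_lt s hs n r
  -- A = sum of low digits of n, n = A + d * P
  set A := ∑ k ∈ Finset.range r, digit s n k * Pprod s k with hA
  have hnA : A + d * P = n := by
    have := digit_sum s hs h2
    rw [Finset.sum_range_succ] at this
    rw [hA, hd, hP]; exact this
  have hAlt : A < P := sum_lt_Pprod s hs r _ (fun k => digit_lt s hs n k)
  -- B = sum of low negated digits
  set B := ∑ k ∈ Finset.range r, ((s k - digit s n k) % s k) * Pprod s k with hB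
  have hBlt : B < P := sum_lt_Pprod s hs r _ (fun k => Nat.mod_lt _ (by linarith [hs k]))
  have honeg : oneg s n = B + (s r - d) * P := by
    rw [oneg_eq s hs h2, Finset.sum_range_succ, ← hd, ← hP, ← hB,
      Nat.mod_eq_of_lt (by omega)]
  refine ⟨?_, ?_, ?_⟩
  · intro hc
    have : d + 1 ≤ s r - d := by omega
    calc n = A + d * P := hnA.symm
      _ < (d + 1) * P := by rw [add_mul, one_mul]; omega
      _ ≤ (s r - d) * P := Nat.mul_le_mul_right _ this
      _ ≤ B + (s r - d) * P := Nat.le_add_left _ _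
      _ = oneg s n := honeg.symm
  · intro hc
    have : s r - d + 1 ≤ d := by omega
    calc oneg s n = B + (s r - d) * P := honeg
      _ < (s r - d + 1) * P := by rw [add_mul, one_mul]; omega
      _ ≤ d * P := Nat.mul_le_mul_right _ this
      _ ≤ A + d * P := Nat.le_add_left _ _
      _ = n := hnA
  · intro hc
    have hsd : s r - d = d := by omega
    have hn'A : n - d * P = A := by omega
    have honeg' : oneg s A = B := by
      have hAr : A < Pprod s r := hAlt
      have hAmod : A = n % P := by
        conv_rhs => rw [← hnA]
        rw [Nat.add_mul_mod_self_right, Nat.mod_eq_of_lt hAlt]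
      rw [oneg_eq s hs hAr, hB]
      apply Finset.sum_congr rfl
      intro k hk
      rw [hAmod, digit_mod s hs n (Finset.mem_range.mp hk)]
    rw [hn'A, honeg', honeg, hsd, ← hnA]
    refine ⟨?_, ?_, ?_⟩ <;> constructor <;> intro h <;> omega
end
end

section
/- Let d, r > 0 with r ≤ 1, and for k ∈ ℕ define g : (0,∞) → ℝ by g(x) = −k·x^{−d} − x^r. Then g attains its absolute maximum at x_k = (d/r)^{1/(d+r)} k^{1/(d+r)}, and with C₁ = (d+r)·d^{−d/(d+r)}·r^{−r/(d+r)} and C₂ = r^{(d+1)/(d+r)}·d^{(r−1)/(d+r)} one has, for every integer N with x_k ≤ N ≤ x_k + 1: −C₁ k^{r/(d+r)} − C₂ k^{(r−1)/(d+r)} ≤ g(N) ≤ sup_{m∈ℕ} g(m) ≤ g(x_k) = −C₁ k^{r/(d+r)}. -/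
noncomputable section

open Real

private lemma rpow_rpow' {x : ℝ} (hx : 0 < x) (a b : ℝ) : (x ^ a) ^ b = x ^ (a * b) :=
  (Real.rpow_mul hx.le a b).symm

private lemma div_rpow' {x y : ℝ} (hx : 0 < x) (hy : 0 < y) (c : ℝ) :
    (x / y) ^ c = x ^ c * y ^ (-c) := by
  rw [Real.div_rpow hx.le hy.le, Real.rpow_neg hy.le, div_eq_mul_inv]

private lemma rpow_add' {x : ℝ} (hx : 0 < x) (a b : ℝ) : x ^ a * x ^ b = x ^ (a + b) :=
  (Real.rpow_add hx a b).symm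

/-- AM-GM lower bound: `C₁ k^{r/(D+r)} ≤ k x^{-D} + x^r`. -/
private lemma amgm_aux {D r k x : ℝ} (hD : 0 < D) (hr : 0 < r) (hk : 0 < k) (hx : 0 < x) :
    (D + r) * D ^ (-D / (D + r)) * r ^ (-r / (D + r)) * k ^ (r / (D + r))
      ≤ k * x ^ (-D) + x ^ r := by
  set s := D + r with hs
  have hs0 : 0 < s := by positivity
  have hsne : s ≠ 0 := ne_of_gt hs0
  have hxD : (0:ℝ) < x ^ (-D) := rpow_pos_of_pos hx _
  have hxr : (0:ℝ) < x ^ r := rpow_pos_of_pos hx _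
  have hw : r / s + D / s = 1 := by rw [← add_div, hs]; field_simp; ring
  have key := Real.geom_mean_le_arith_mean2_weighted
    (w₁ := r / s) (w₂ := D / s)
    (p₁ := s / r * (k * x ^ (-D))) (p₂ := s / D * x ^ r)
    (by positivity) (by positivity) (by positivity) (by positivity) hw
  have hrhs : r / s * (s / r * (k * x ^ (-D))) + D / s * (s / D * x ^ r)
      = k * x ^ (-D) + x ^ r := by
    field_simp
  rw [hrhs] at key
  refine le_trans (le_of_eq ?_) key
  rw [Real.mul_rpow (by positivity) (by positivity),
      Real.mul_rpow (by positivity) (by positivity),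
      Real.mul_rpow (by positivity) (by positivity),
      rpow_rpow' hx, rpow_rpow' hx,
      div_rpow' hs0 hr, div_rpow' hs0 hD]
  have hx0 : x ^ (-D * (r / s)) * x ^ (r * (D / s)) = 1 := by
    rw [rpow_add' hx]
    have : -D * (r / s) + r * (D / s) = 0 := by ring
    rw [this, Real.rpow_zero]
  have hss : s ^ (r / s) * s ^ (D / s) = s := by
    rw [rpow_add' hs0, hw, Real.rpow_one]
  have hre : -(r / s) = -r / s := by ring
  have hde : -(D / s) = -D / s := by ring
  calc (D + r) * D ^ (-D / s) * r ^ (-r / s) * k ^ (r / s)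
      = (s ^ (r / s) * s ^ (D / s)) * D ^ (-(D / s)) * r ^ (-(r / s)) * k ^ (r / s) *
          (x ^ (-D * (r / s)) * x ^ (r * (D / s))) := by
        rw [hss, hre, hde, hx0, ← hs]; ring
    _ = s ^ (r / s) * r ^ (-(r / s)) * (k ^ (r / s) * x ^ (-D * (r / s))) *
          (s ^ (D / s) * D ^ (-(D / s)) * x ^ (r * (D / s))) := by ring

/-- Value identity at the maximizer. -/
private lemma value_aux {D r k : ℝ} (hD : 0 < D) (hr : 0 < r) (hk : 0 < k) :
    k * ((D / r) ^ (1 / (D + r)) * k ^ (1 / (D + r))) ^ (-D)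
      + ((D / r) ^ (1 / (D + r)) * k ^ (1 / (D + r))) ^ r
      = (D + r) * D ^ (-D / (D + r)) * r ^ (-r / (D + r)) * k ^ (r / (D + r)) := by
  set s := D + r with hs
  have hs0 : 0 < s := by positivity
  have hsne : D + r ≠ 0 := by positivity
  have ha : (0:ℝ) < D / r := by positivity
  have h1 : ∀ c : ℝ, ((D / r) ^ (1 / s) * k ^ (1 / s)) ^ c
      = (D / r) ^ (c / s) * k ^ (c / s) := by
    intro c
    rw [Real.mul_rpow (by positivity) (by positivity), rpow_rpow' ha, rpow_rpow' hk]
    ring_nf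
  rw [h1, h1]
  have hkk : k * k ^ (-D / s) = k ^ (r / s) := by
    nth_rewrite 1 [← Real.rpow_one k]
    rw [rpow_add' hk]
    congr 1
    rw [hs]
    field_simp
    ring
  have e1 : (D / r) ^ (-D / s) = D ^ (-D / s) * (r * r ^ (-r / s)) := by
    rw [div_rpow' hD hr]
    congr 1
    have h : -(-D / s) = 1 + -r / s := by rw [hs]; field_simp; ring
    rw [h, ← rpow_add' hr, Real.rpow_one]
  have e2 : (D / r) ^ (r / s) = (D * D ^ (-D / s)) * r ^ (-r / s) := by
    rw [div_rpow' hD hr]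
    have hre : -(r / s) = -r / s := by ring
    rw [hre]
    congr 1
    have h : r / s = 1 + -D / s := by rw [hs]; field_simp; ring
    rw [h, ← rpow_add' hD, Real.rpow_one]
  calc k * ((D / r) ^ (-D / s) * k ^ (-D / s)) + (D / r) ^ (r / s) * k ^ (r / s)
      = (D / r) ^ (-D / s) * (k * k ^ (-D / s)) + (D / r) ^ (r / s) * k ^ (r / s) := by ring
    _ = ((D / r) ^ (-D / s) + (D / r) ^ (r / s)) * k ^ (r / s) := by rw [hkk]; ring
    _ = (D + r) * D ^ (-D / s) * r ^ (-r / s) * k ^ (r / s) := by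
        rw [e1, e2]; ring

/-- The correction term identity: `r · x_k^{r-1} = C₂ k^{(r-1)/(D+r)}`. -/
private lemma step_aux {D r k : ℝ} (hD : 0 < D) (hr : 0 < r) (hk : 0 < k) :
    r * ((D / r) ^ (1 / (D + r)) * k ^ (1 / (D + r))) ^ (r - 1)
      = r ^ ((D + 1) / (D + r)) * D ^ ((r - 1) / (D + r)) * k ^ ((r - 1) / (D + r)) := by
  set s := D + r with hs
  have hs0 : 0 < s := by positivity
  have hsne : D + r ≠ 0 := by positivity
  have ha : (0:ℝ) < D / r := by positivity
  rw [Real.mul_rpow (by positivity) (by positivity), rpow_rpow' ha, rpow_rpow' hk]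
  have h1 : 1 / s * (r - 1) = (r - 1) / s := by ring
  rw [h1, div_rpow' hD hr]
  have h2 : r * r ^ (-((r - 1) / s)) = r ^ ((D + 1) / s) := by
    nth_rewrite 1 [← Real.rpow_one r]
    rw [rpow_add' hr]
    congr 1
    rw [hs]
    field_simp
    ring
  calc r * (D ^ ((r - 1) / s) * r ^ (-((r - 1) / s)) * k ^ ((r - 1) / s))
      = (r * r ^ (-((r - 1) / s))) * D ^ ((r - 1) / s) * k ^ ((r - 1) / s) := by ring
    _ = r ^ ((D + 1) / s) * D ^ ((r - 1) / s) * k ^ ((r - 1) / s) := by rw [h2]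

/-- Bernoulli-type bound: `(x+1)^r ≤ x^r + r x^{r-1}` for `0 < x`, `0 ≤ r ≤ 1`. -/
private lemma bern_aux {x r : ℝ} (hx : 0 < x) (hr : 0 ≤ r) (hr1 : r ≤ 1) :
    (x + 1) ^ r ≤ x ^ r + r * x ^ (r - 1) := by
  have h1 : x + 1 = x * (1 + 1 / x) := by field_simp
  have h2 : (1 + 1 / x) ^ r ≤ 1 + r * (1 / x) :=
    rpow_one_add_le_one_add_mul_self (by have := one_div_pos.mpr hx; linarith) hr hr1
  have h3 : x ^ (r - 1) = x ^ r / x := by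
    rw [Real.rpow_sub hx, Real.rpow_one]
  rw [h1, Real.mul_rpow hx.le (by positivity)]
  have hxr : (0:ℝ) < x ^ r := rpow_pos_of_pos hx _
  calc x ^ r * (1 + 1 / x) ^ r ≤ x ^ r * (1 + r * (1 / x)) :=
        mul_le_mul_of_nonneg_left h2 hxr.le
    _ = x ^ r + r * (x ^ r / x) := by field_simp
    _ = x ^ r + r * x ^ (r - 1) := by rw [h3]

/-- `g(x) = -k·x^{-d} - x^r`. -/
def gInf (d : ℕ) (r : ℝ) (k : ℕ) (x : ℝ) : ℝ :=
  -(k : ℝ) * x ^ (-(d : ℝ)) - x ^ r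

/-- The maximizer `x_k = (d/r)^{1/(d+r)} k^{1/(d+r)}`. -/
def xkInf (d : ℕ) (r : ℝ) (k : ℕ) : ℝ :=
  ((d : ℝ) / r) ^ (1 / ((d : ℝ) + r)) * (k : ℝ) ^ (1 / ((d : ℝ) + r))

/-- `C₁ = (d+r)·d^{-d/(d+r)}·r^{-r/(d+r)}`. -/
def C1Inf (d : ℕ) (r : ℝ) : ℝ :=
  ((d : ℝ) + r) * (d : ℝ) ^ (-(d : ℝ) / ((d : ℝ) + r)) * r ^ (-r / ((d : ℝ) + r))

/-- `C₂ = r^{(d+1)/(d+r)}·d^{(r-1)/(d+r)}`. -/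
def C2Inf (d : ℕ) (r : ℝ) : ℝ :=
  r ^ (((d : ℝ) + 1) / ((d : ℝ) + r)) * (d : ℝ) ^ ((r - 1) / ((d : ℝ) + r))

theorem max_of_aux_function_infinite (d : ℕ) (r : ℝ) (hd : 0 < d) (hr : 0 < r)
    (hr1 : r ≤ 1) (k : ℕ) (hk : 1 ≤ k) :
    (∀ x : ℝ, 0 < x → gInf d r k x ≤ gInf d r k (xkInf d r k)) ∧
    gInf d r k (xkInf d r k) = -C1Inf d r * (k : ℝ) ^ (r / ((d : ℝ) + r)) ∧
    (∀ m : ℕ, 0 < m → gInf d r k (m : ℝ) ≤ gInf d r k (xkInf d r k)) ∧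
    (∀ N : ℕ, xkInf d r k ≤ (N : ℝ) → (N : ℝ) ≤ xkInf d r k + 1 →
      -C1Inf d r * (k : ℝ) ^ (r / ((d : ℝ) + r)) -
          C2Inf d r * (k : ℝ) ^ ((r - 1) / ((d : ℝ) + r)) ≤ gInf d r k (N : ℝ)) := by
  have hD0 : (0:ℝ) < (d : ℝ) := by exact_mod_cast hd
  have hk0 : (0:ℝ) < (k : ℝ) := by exact_mod_cast hk
  have hval := value_aux (D := (d : ℝ)) (r := r) (k := (k : ℝ)) hD0 hr hk0
  have hvalg : gInf d r k (xkInf d r k) = -C1Inf d r * (k : ℝ) ^ (r / ((d : ℝ) + r)) := by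
    simp only [gInf, xkInf, C1Inf]
    linear_combination -hval
  have hmax : ∀ x : ℝ, 0 < x → gInf d r k x ≤ gInf d r k (xkInf d r k) := by
    intro x hx
    have h1 := amgm_aux (D := (d : ℝ)) (r := r) (k := (k : ℝ)) (x := x) hD0 hr hk0 hx
    rw [hvalg]
    simp only [gInf, C1Inf]
    nlinarith [h1]
  refine ⟨hmax, hvalg, fun m hm => hmax m (by exact_mod_cast hm), ?_⟩
  intro N hN1 hN2
  have hstep := step_aux (D := (d : ℝ)) (r := r) (k := (k : ℝ)) hD0 hr hk0
  have hxk1 : (1:ℝ) ≤ xkInf d r k := by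
    unfold xkInf
    have h1 : (1:ℝ) ≤ ((d : ℝ) / r) ^ (1 / ((d : ℝ) + r)) := by
      apply Real.one_le_rpow
      · rw [le_div_iff₀ hr]
        have : (1:ℝ) ≤ (d : ℝ) := by exact_mod_cast hd
        linarith
      · positivity
    have h2 : (1:ℝ) ≤ (k : ℝ) ^ (1 / ((d : ℝ) + r)) :=
      Real.one_le_rpow (by exact_mod_cast hk) (by positivity)
    nlinarith [h1, h2]
  have hxk0 : (0:ℝ) < xkInf d r k := lt_of_lt_of_le one_pos hxk1
  have hN0 : (0:ℝ) < (N : ℝ) := lt_of_lt_of_le hxk0 hN1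
  have hm1 : (N : ℝ) ^ (-(d : ℝ)) ≤ (xkInf d r k) ^ (-(d : ℝ)) :=
    Real.rpow_le_rpow_of_nonpos hxk0 hN1 (neg_nonpos.mpr hD0.le)
  have hm1' : (k : ℝ) * (N : ℝ) ^ (-(d : ℝ)) ≤ (k : ℝ) * (xkInf d r k) ^ (-(d : ℝ)) :=
    mul_le_mul_of_nonneg_left hm1 hk0.le
  have hm2 : (N : ℝ) ^ r ≤ (xkInf d r k + 1) ^ r :=
    Real.rpow_le_rpow hN0.le hN2 hr.le
  have hbern : (xkInf d r k + 1) ^ r ≤ (xkInf d r k) ^ r + r * (xkInf d r k) ^ (r - 1) :=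
    bern_aux hxk0 hr.le hr1
  have hC2 : C2Inf d r * (k : ℝ) ^ ((r - 1) / ((d : ℝ) + r))
      = r * (xkInf d r k) ^ (r - 1) := by
    simp only [C2Inf, xkInf]
    exact hstep.symm
  have hC1 : C1Inf d r * (k : ℝ) ^ (r / ((d : ℝ) + r))
      = (k : ℝ) * (xkInf d r k) ^ (-(d : ℝ)) + (xkInf d r k) ^ r := by
    simp only [C1Inf, xkInf]
    exact hval.symm
  simp only [gInf]
  nlinarith [hm1', hm2, hbern, hC1, hC2]
end
end
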